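/- Let H be a complex Hilbert space and let T be a bounded operator on H. Suppose λ_1, …, λ_s are complex numbers, m_1, …, m_s are positive integers, and C_{i,j} (1 ≤ i ≤ s, 0 ≤ j ≤ m_i − 1) are bounded operators on H such that T^n = Σ_{i=1}^{s} Σ_{j=0}^{m_i−1} C_{i,j} · n^j · λ_i^n for every n ≥ 0. Then the operator exponential satisfies exp(T) = Σ_{i=1}^{s} Σ_{j=0}^{m_i−1} C_{i,j} · e^{λ_i} · B_j(λ_i), where B_j is the j-th Bell polynomial, B_j(x) = Σ_{k=0}^{j} S(j,k) x^k, and S(j,k) is the Stirling number of the second kind (the number of partitions of a set with j elements into k nonempty blocks). -/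

import Mathlib

open Finset

/-- The Stirling number of the second kind `S(n, k)`: the number of partitions of a set with
`n` elements into exactly `k` nonempty blocks. -/
noncomputable def stirlingSecond (n k : ℕ) : ℕ :=
  Nat.card {P : Finpartition (Finset.univ : Finset (Fin n)) // P.parts.card = k}

/-- The `j`-th Bell polynomial `B_j(x) = Σ_{k=0}^{j} S(j,k) xᵏ`. -/
noncomputable def bellPoly (j : ℕ) (x : ℂ) : ℂ :=
  ∑ k ∈ Finset.range (j + 1), (stirlingSecond j k : ℂ) * x ^ k

section Combinatorics

variable {α β : Type*} [Fintype α] [DecidableEq α] [DecidableEq β]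

/-- The partition of `univ : Finset α` into fibers of `f`. -/
noncomputable def fiberPartition (f : α → β) : Finpartition (Finset.univ : Finset α) :=
  letI : DecidableRel (Setoid.ker f).r := fun a b => inferInstanceAs (Decidable (f a = f b))
  Finpartition.ofSetoid (Setoid.ker f)

lemma mem_fiberPartition_part (f : α → β) (a b : α) :
    b ∈ (fiberPartition f).part a ↔ f a = f b := by
  letI : DecidableRel (Setoid.ker f).r := fun a b => inferInstanceAs (Decidable (f a = f b))
  exact Finpartition.mem_part_ofSetoid_iff_rel

lemma Finpartition.parts_subset_of_part_eq
    {P Q : Finpartition (Finset.univ : Finset α)}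
    (h : ∀ a, P.part a = Q.part a) : P.parts ⊆ Q.parts := fun b hb => by
  obtain ⟨a, ha⟩ := P.nonempty_of_mem_parts hb
  rw [← P.part_eq_of_mem hb ha, h]
  exact Q.part_mem.2 (mem_univ a)

lemma Finpartition.eq_of_part_eq {P Q : Finpartition (Finset.univ : Finset α)}
    (h : ∀ a, P.part a = Q.part a) : P = Q := by
  ext b
  exact ⟨fun hb => Finpartition.parts_subset_of_part_eq h hb,
    fun hb => Finpartition.parts_subset_of_part_eq (fun a => (h a).symm) hb⟩

variable {j n : ℕ}

/-- Functions with a prescribed fiber partition `P` correspond to injections of the parts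
of `P` into the codomain. -/
noncomputable def fiberEquiv (j n : ℕ) (P : Finpartition (Finset.univ : Finset (Fin j))) :
    {f : Fin j → Fin n // fiberPartition f = P} ≃ ((↥P.parts) ↪ Fin n) where
  toFun fp := ⟨fun b => fp.1 ((b : Finset (Fin j)).min' (P.nonempty_of_mem_parts b.2)), by
    rintro ⟨b₁, hb₁⟩ ⟨b₂, hb₂⟩ hfb
    have h2 : (b₂.min' (P.nonempty_of_mem_parts hb₂)) ∈
        (fiberPartition fp.1).part (b₁.min' (P.nonempty_of_mem_parts hb₁)) :=
      (mem_fiberPartition_part _ _ _).2 hfb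
    rw [fp.2, P.part_eq_of_mem hb₁ (Finset.min'_mem _ _)] at h2
    exact Subtype.ext (P.eq_of_mem_parts hb₁ hb₂ h2 (Finset.min'_mem _ _))⟩
  invFun g := ⟨fun a => g ⟨P.part a, P.part_mem.2 (mem_univ a)⟩, by
    apply Finpartition.eq_of_part_eq
    intro a
    ext x
    rw [mem_fiberPartition_part]
    constructor
    · intro hx
      have : P.part a = P.part x := by
        have := g.injective hx
        exact congrArg Subtype.val this
      exact (P.mem_part_iff_part_eq_part (mem_univ x) (mem_univ a)).2 this.symm
    · intro hx
      have : P.part x = P.part a :=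
        (P.mem_part_iff_part_eq_part (mem_univ x) (mem_univ a)).1 hx
      exact congrArg g (Subtype.ext this.symm)⟩
  left_inv fp := by
    apply Subtype.ext
    funext a
    simp only
    have hmem : (P.part a).min' (P.nonempty_of_mem_parts (P.part_mem.2 (mem_univ a)))
        ∈ (fiberPartition fp.1).part a := by
      rw [fp.2]
      exact Finset.min'_mem _ _
    exact ((mem_fiberPartition_part fp.1 a _).1 hmem).symm
  right_inv g := by
    ext ⟨b, hb⟩
    simp only
    have h : P.part (b.min' (P.nonempty_of_mem_parts hb)) = b :=
      P.part_eq_of_mem hb (Finset.min'_mem _ _)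
    have e : (⟨P.part (b.min' (P.nonempty_of_mem_parts hb)), P.part_mem.2 (mem_univ _)⟩ :
        {x // x ∈ P.parts}) = ⟨b, hb⟩ := Subtype.ext h
    exact congrArg (fun x => (g x : ℕ)) e

lemma pow_eq_sum_descFactorial (n j : ℕ) :
    n ^ j = ∑ P : Finpartition (Finset.univ : Finset (Fin j)),
      n.descFactorial P.parts.card := by
  calc n ^ j = Fintype.card (Fin j → Fin n) := by
        rw [Fintype.card_fun, Fintype.card_fin, Fintype.card_fin]
    _ = Fintype.card (Σ P : Finpartition (Finset.univ : Finset (Fin j)),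
          {f : Fin j → Fin n // fiberPartition f = P}) :=
        (Fintype.card_congr (Equiv.sigmaFiberEquiv fiberPartition)).symm
    _ = ∑ P : Finpartition (Finset.univ : Finset (Fin j)),
          Fintype.card {f : Fin j → Fin n // fiberPartition f = P} := Fintype.card_sigma
    _ = ∑ P : Finpartition (Finset.univ : Finset (Fin j)), n.descFactorial P.parts.card := by
        refine Finset.sum_congr rfl fun P _ => ?_
        rw [Fintype.card_congr (fiberEquiv j n P), Fintype.card_embedding_eq,
          Fintype.card_coe, Fintype.card_fin]

lemma pow_eq_sum_stirling (j n : ℕ) :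
    n ^ j = ∑ k ∈ Finset.range (j + 1), stirlingSecond j k * n.descFactorial k := by
  rw [pow_eq_sum_descFactorial n j]
  rw [← Finset.sum_fiberwise_of_maps_to
    (g := fun P : Finpartition (Finset.univ : Finset (Fin j)) => P.parts.card)
    (t := Finset.range (j + 1))
    (fun P _ => Finset.mem_range.2 (Nat.lt_succ_of_le
      (le_trans P.card_parts_le_card (by simp))))
    (fun P => n.descFactorial P.parts.card)]
  refine Finset.sum_congr rfl fun k _ => ?_
  have hc : ∀ P ∈ Finset.univ.filter
      (fun P : Finpartition (Finset.univ : Finset (Fin j)) => P.parts.card = k),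
      n.descFactorial P.parts.card = n.descFactorial k := fun P hP => by
    rw [(Finset.mem_filter.1 hP).2]
  rw [Finset.sum_congr rfl hc, Finset.sum_const, smul_eq_mul]
  congr 1
  rw [stirlingSecond, Nat.card_eq_fintype_card, Fintype.card_subtype]

end Combinatorics

lemma hasSum_descFactorial_mul (k : ℕ) (z : ℂ) :
    HasSum (fun n : ℕ => (n.descFactorial k : ℂ) * z ^ n / n.factorial)
      (z ^ k * Complex.exp z) := by
  have h0 : HasSum (fun n : ℕ => z ^ n / n.factorial) (Complex.exp z) := by
    rw [Complex.exp_eq_exp_ℂ]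
    exact NormedSpace.expSeries_div_hasSum_exp z
  have h1 := h0.mul_left (z ^ k)
  have h2 : (fun n : ℕ => z ^ k * (z ^ n / n.factorial))
      = fun n : ℕ => ((n + k).descFactorial k : ℂ) * z ^ (n + k) / (n + k).factorial := by
    funext n
    have hd : ((n + k).descFactorial k : ℂ) * (n.factorial : ℂ) = ((n + k).factorial : ℂ) := by
      have : (n + k).descFactorial k * n.factorial = (n + k).factorial := by
        rw [Nat.add_descFactorial_eq_ascFactorial, mul_comm, Nat.factorial_mul_ascFactorial]
      exact_mod_cast congrArg (Nat.cast : ℕ → ℂ) this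
    have hn : (n.factorial : ℂ) ≠ 0 := Nat.cast_ne_zero.2 n.factorial_ne_zero
    have hnk : ((n + k).factorial : ℂ) ≠ 0 := Nat.cast_ne_zero.2 (n + k).factorial_ne_zero
    field_simp
    rw [← hd, pow_add]
    ring
  rw [h2] at h1
  have h3 := (hasSum_nat_add_iff (f := fun n : ℕ =>
    (n.descFactorial k : ℂ) * z ^ n / n.factorial) k).1 h1
  have h4 : ∑ i ∈ Finset.range k, (i.descFactorial k : ℂ) * z ^ i / i.factorial = 0 := by
    refine Finset.sum_eq_zero fun i hi => ?_
    rw [Nat.descFactorial_eq_zero_iff_lt.2 (Finset.mem_range.1 hi)]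
    simp
  rwa [h4, add_zero] at h3

lemma hasSum_pow_mul (j : ℕ) (z : ℂ) :
    HasSum (fun n : ℕ => (n : ℂ) ^ j * z ^ n / n.factorial)
      (Complex.exp z * bellPoly j z) := by
  have hfun : (fun n : ℕ => (n : ℂ) ^ j * z ^ n / n.factorial)
      = fun n : ℕ => ∑ k ∈ Finset.range (j + 1),
          (stirlingSecond j k : ℂ) * ((n.descFactorial k : ℂ) * z ^ n / n.factorial) := by
    funext n
    have h1 : ((n : ℂ)) ^ j = ((n ^ j : ℕ) : ℂ) := by push_cast; ring
    rw [h1, pow_eq_sum_stirling j n]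
    push_cast
    rw [Finset.sum_mul, Finset.sum_div]
    refine Finset.sum_congr rfl fun k _ => ?_
    ring
  rw [hfun]
  have h := hasSum_sum (s := Finset.range (j + 1))
    (f := fun k (n : ℕ) =>
      (stirlingSecond j k : ℂ) * ((n.descFactorial k : ℂ) * z ^ n / n.factorial))
    (a := fun k => (stirlingSecond j k : ℂ) * (z ^ k * Complex.exp z))
    (fun k _ => (hasSum_descFactorial_mul k z).mul_left _)
  have heq : ∑ k ∈ Finset.range (j + 1), (stirlingSecond j k : ℂ) * (z ^ k * Complex.exp z)
      = Complex.exp z * bellPoly j z := by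
    rw [bellPoly, Finset.mul_sum]
    refine Finset.sum_congr rfl fun k _ => ?_
    ring
  rwa [heq] at h

/-- If the powers of a bounded operator `T` admit a Binet-type expansion
`Tⁿ = Σ_i Σ_j C_{i,j} nʲ λᵢⁿ`, then the operator exponential is given by
`exp(T) = Σ_i Σ_j C_{i,j} e^{λᵢ} B_j(λᵢ)`, where `B_j` is the `j`-th Bell polynomial. -/
theorem exp_of_algebraic_operator
    {H : Type*} [NormedAddCommGroup H] [InnerProductSpace ℂ H] [CompleteSpace H]
    (T : H →L[ℂ] H) {s : ℕ} (lam : Fin s → ℂ) (m : Fin s → ℕ) (hm : ∀ i, 0 < m i)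
    (Coef : (i : Fin s) → Fin (m i) → H →L[ℂ] H)
    (hT : ∀ n : ℕ, T ^ n = ∑ i : Fin s, ∑ j : Fin (m i),
      (((n : ℂ) ^ (j : ℕ)) * lam i ^ n) • Coef i j) :
    NormedSpace.exp T = ∑ i : Fin s, ∑ j : Fin (m i),
      (Complex.exp (lam i) * bellPoly (j : ℕ) (lam i)) • Coef i j := by
  have hET : HasSum (fun n : ℕ => ((n.factorial : ℂ))⁻¹ • T ^ n) (NormedSpace.exp T) :=
    NormedSpace.exp_series_hasSum_exp' T
  have key : ∀ n : ℕ, ((n.factorial : ℂ))⁻¹ • T ^ n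
      = ∑ i : Fin s, ∑ j : Fin (m i),
          ((n : ℂ) ^ (j : ℕ) * lam i ^ n / n.factorial) • Coef i j := by
    intro n
    rw [hT n, Finset.smul_sum]
    refine Finset.sum_congr rfl fun i _ => ?_
    rw [Finset.smul_sum]
    refine Finset.sum_congr rfl fun j _ => ?_
    rw [smul_smul]
    congr 1
    field_simp
  have hsum : HasSum (fun n : ℕ => ∑ i : Fin s, ∑ j : Fin (m i),
      ((n : ℂ) ^ (j : ℕ) * lam i ^ n / n.factorial) • Coef i j)
      (∑ i : Fin s, ∑ j : Fin (m i),
        (Complex.exp (lam i) * bellPoly (j : ℕ) (lam i)) • Coef i j) :=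
    hasSum_sum fun i _ => hasSum_sum fun j _ =>
      (hasSum_pow_mul (j : ℕ) (lam i)).smul_const (Coef i j)
  simp_rw [key] at hET
  exact hET.unique hsum
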